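/- Let C = {x,y,z} be a set of three clocks. Define A = {v ∈ ℝ≥0^C : v(z) = 0 and v(x) = v(y)} and B = {v ∈ ℝ≥0^C : v(y) ≥ 2, v(z) ≤ 2, v(y) − v(x) ≤ 1 and v(x) − v(z) ≤ 1}. Then A ∩ B = ∅, and there is no set I of the form I = {v ∈ ℝ≥0^C : v(x') − v(y') ≺ k} for some x',y' ∈ C0 and bound (k,≺) such that A ⊆ I and I ∩ B = ∅. In other words, the pair of disjoint zones (A,B) admits no interpolant defined by a single atomic constraint. -/

import Mathlib

/-- A bound `(k, ≺)`: an integer `k` together with a strictness flag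
(`true` codes `≤`, `false` codes `<`), ordered lexicographically,
so that `(k, <) < (k, ≤) < (k+1, <)`. -/
abbrev Bnd : Type := Lex (ℤ × Bool)

/-- Addition of bounds: `(k,≺) + (k',≺')` is `(k+k', ≺'')` where `≺''` is `≤`
iff both `≺` and `≺'` are `≤`. -/
instance : Add Bnd :=
  ⟨fun a b => toLex ((ofLex a).1 + (ofLex b).1, (ofLex a).2 && (ofLex b).2)⟩

/-- The zero bound is `(0, ≤)`. -/
instance : Zero Bnd := ⟨toLex (0, true)⟩

instance : AddCommMonoid Bnd where
  toAdd := instAddBnd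
  toZero := instZeroBnd
  nsmul := nsmulRec
  add_assoc a b c := by
    change toLex (((ofLex a).1 + (ofLex b).1) + (ofLex c).1,
        (((ofLex a).2 && (ofLex b).2) && (ofLex c).2)) =
      toLex ((ofLex a).1 + ((ofLex b).1 + (ofLex c).1),
        ((ofLex a).2 && ((ofLex b).2 && (ofLex c).2)))
    rw [add_assoc, Bool.and_assoc]
  zero_add a := by
    change toLex ((0 : ℤ) + (ofLex a).1, (true && (ofLex a).2)) = a
    simp
  add_zero a := by
    change toLex ((ofLex a).1 + (0 : ℤ), ((ofLex a).2 && true)) = a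
    simp
  add_comm a b := by
    change toLex ((ofLex a).1 + (ofLex b).1, ((ofLex a).2 && (ofLex b).2)) =
      toLex ((ofLex b).1 + (ofLex a).1, ((ofLex b).2 && (ofLex a).2))
    rw [add_comm, Bool.and_comm]

/-- `satB d b` says that `d ≺ k`, where `b = (k, ≺)`. -/
def satB (d : ℝ) (b : Bnd) : Prop :=
  if (ofLex b).2 then d ≤ ((ofLex b).1 : ℝ) else d < ((ofLex b).1 : ℝ)


/-- Extended valuation on `C0 = C ∪ {0}`: the special clock `0` is `none`. -/
def val0 {C : Type*} (v : C → ℝ) : Option C → ℝ := fun x => x.elim 0 v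

/-- The three clocks `x`, `y`, `z` are `0`, `1`, `2 : Fin 3`.  The zone `A`:
`z = 0 ∧ x = y`. -/
def zoneA : Set (Fin 3 → ℝ) :=
  {v | (∀ c, 0 ≤ v c) ∧ v 2 = 0 ∧ v 0 = v 1}

/-- The zone `B`: `y ≥ 2 ∧ z ≤ 2 ∧ y − x ≤ 1 ∧ x − z ≤ 1`. -/
def zoneB : Set (Fin 3 → ℝ) :=
  {v | (∀ c, 0 ≤ v c) ∧ 2 ≤ v 1 ∧ v 2 ≤ 2 ∧ v 1 - v 0 ≤ 1 ∧ v 0 - v 2 ≤ 1}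


lemma satB_mono {d d' : ℝ} (b : Bnd) (h : d' ≤ d) (hb : satB d b) : satB d' b := by
  unfold satB at *; split at hb <;> simp_all <;> linarith

lemma satB_le {d : ℝ} {b : Bnd} (h : satB d b) : d ≤ ((ofLex b).1 : ℝ) := by
  unfold satB at h; split at h <;> linarith

lemma w1_mem : (![1,2,0] : Fin 3 → ℝ) ∈ zoneB := by
  refine ⟨fun c => ?_, by norm_num, by change (0:ℝ) ≤ 2; norm_num, by norm_num, by change (1:ℝ) - 0 ≤ 1; norm_num⟩
  fin_cases c <;> norm_num

lemma w2_mem : (![2,2,1] : Fin 3 → ℝ) ∈ zoneB := by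
  refine ⟨fun c => ?_, by norm_num, by change (1:ℝ) ≤ 2; norm_num, by norm_num, by change (2:ℝ) - 1 ≤ 1; norm_num⟩
  fin_cases c <;> norm_num

lemma w1_nonneg : ∀ c, 0 ≤ (![1,2,0] : Fin 3 → ℝ) c := w1_mem.1
lemma w2_nonneg : ∀ c, 0 ≤ (![2,2,1] : Fin 3 → ℝ) c := w2_mem.1

lemma zero_memA : (fun _ => (0:ℝ)) ∈ zoneA := ⟨fun _ => le_refl _, rfl, rfl⟩

lemma vt_memA (t : ℝ) (ht : 0 ≤ t) : (![t,t,0] : Fin 3 → ℝ) ∈ zoneA := by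
  refine ⟨fun c => ?_, by change (0:ℝ) = 0; rfl, by norm_num⟩
  fin_cases c <;> norm_num [ht]

/-- The zones `A` and `B` are disjoint, but no set defined by a single atomic
clock constraint `x' − y' ≺ k` (with `x', y' ∈ C ∪ {0}`) separates them:
the pair `(A, B)` admits no simple interpolant. -/
theorem no_simple_interpolant :
    zoneA ∩ zoneB = ∅ ∧
      ¬ ∃ (x' y' : Option (Fin 3)) (b : Bnd),
          zoneA ⊆ {v | (∀ c, 0 ≤ v c) ∧ satB (val0 v x' - val0 v y') b} ∧
          {v : Fin 3 → ℝ | (∀ c, 0 ≤ v c) ∧ satB (val0 v x' - val0 v y') b} ∩ zoneB = ∅ := by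
  constructor
  · ext v
    simp only [Set.mem_inter_iff, Set.mem_empty_iff_false, iff_false, zoneA, zoneB,
      Set.mem_setOf_eq]
    rintro ⟨⟨_, hz, hxy⟩, _, hy, _, hyx, hxz⟩
    linarith
  · rintro ⟨x', y', b, hA, hB⟩
    have hB' := Set.eq_empty_iff_forall_notMem.mp hB
    set k : ℝ := ((ofLex b).1 : ℝ) with hk
    have he : ∀ o : Option (Fin 3), val0 (fun _ => (0:ℝ)) o = 0 := by
      rintro (_ | _) <;> simp [val0]
    have h0 : satB 0 b := by
      have := (hA zero_memA).2
      rw [he, he, sub_zero] at this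
      exact this
    have ht : val0 (![max k 0 + 1, max k 0 + 1, 0] : Fin 3 → ℝ) x'
          - val0 (![max k 0 + 1, max k 0 + 1, 0] : Fin 3 → ℝ) y' = max k 0 + 1 → False := by
      intro heq
      have h1 := satB_le ((hA (vt_memA (max k 0 + 1) (by have := le_max_right k 0; linarith))).2)
      rw [heq] at h1
      have := le_max_left k 0
      linarith
    rcases x' with _ | x' <;> rcases y' with _ | y'
    all_goals try fin_cases x'
    all_goals try fin_cases y'
    all_goals first
      | (refine ht ?_; norm_num [val0]; done)
      | (refine hB' ![1,2,0] ⟨⟨w1_nonneg, satB_mono b ?_ h0⟩, w1_mem⟩; norm_num [val0]; done)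
      | (refine hB' ![2,2,1] ⟨⟨w2_nonneg, satB_mono b ?_ h0⟩, w2_mem⟩; norm_num [val0]; done)
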